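/- Let n, s, t, p be positive integers and n_1 ≥ n_2 ≥ … ≥ n_t ≥ p with n = n_1 + n_2 + … + n_t + s. If n_1 < n − s − p(t−1), then ρ(K_s ∇ (K_{n_1} ∪ K_{n_2} ∪ ⋯ ∪ K_{n_t})) < ρ(K_s ∇ (K_{n−s−p(t−1)} ∪ (t−1)K_p)). -/

import Mathlib

set_option maxHeartbeats 1000000


open SimpleGraph Matrix Finset Metric

/-- The spectral radius (largest adjacency eigenvalue) of a finite simple graph. -/
noncomputable def specRad {V : Type*} [Fintype V] (G : SimpleGraph V) : ℝ :=
  letI : DecidableRel G.Adj := Classical.decRel _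
  sSup {μ : ℝ | ∃ x : V → ℝ, x ≠ 0 ∧ G.adjMatrix ℝ *ᵥ x = μ • x}

/-- `joinCliques s t m` is `K_s ∇ (K_{m 0} ∪ K_{m 1} ∪ ⋯ ∪ K_{m (t-1)})`. -/
def joinCliques (s t : ℕ) (m : Fin t → ℕ) :
    SimpleGraph (Fin s ⊕ (Σ i : Fin t, Fin (m i))) where
  Adj x y := x ≠ y ∧ ∀ p q, x = Sum.inr p → y = Sum.inr q → p.1 = q.1
  symm := ⟨fun x y ⟨h1, h2⟩ => ⟨Ne.symm h1, fun p q hy hx => (h2 q p hx hy).symm⟩⟩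
  loopless := ⟨fun x ⟨h1, _⟩ => h1 rfl⟩

lemma specRad_key {V : Type*} [Fintype V] [DecidableEq V] [Nonempty V]
    (G : SimpleGraph V) :
    letI : DecidableRel G.Adj := Classical.decRel _
    ∃ (ρ : ℝ) (x : V → ℝ), x ≠ 0 ∧ (∀ v, 0 ≤ x v) ∧
      G.adjMatrix ℝ *ᵥ x = ρ • x ∧ specRad G = ρ ∧
      ∀ z : V → ℝ, ∑ v, (G.adjMatrix ℝ *ᵥ z) v * z v ≤ ρ * ∑ v, z v ^ 2 := by
  letI : DecidableRel G.Adj := Classical.decRel _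
  set A := G.adjMatrix ℝ with hA
  let T : EuclideanSpace ℝ V →L[ℝ] EuclideanSpace ℝ V :=
    LinearMap.toContinuousLinearMap (Matrix.toEuclideanLin A)
  have hTapp : ∀ (y : EuclideanSpace ℝ V) (v : V), T y v = (A *ᵥ y) v := fun y v => rfl
  have hAnn : ∀ v u, 0 ≤ A v u := by
    intro v u; rw [hA]; simp [SimpleGraph.adjMatrix_apply]; positivity
  have hsym : IsSelfAdjoint T := by
    rw [ContinuousLinearMap.isSelfAdjoint_iff_isSymmetric]
    have h1 : A.IsHermitian := by
      ext i j
      simp [Matrix.conjTranspose_apply, hA, SimpleGraph.adjMatrix_apply, SimpleGraph.adj_comm]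
    exact Matrix.isHermitian_iff_isSymmetric.mp h1
  have hRe : ∀ y : EuclideanSpace ℝ V, T.reApplyInnerSelf y = ∑ v, (A *ᵥ y) v * y v := by
    intro y
    simp only [ContinuousLinearMap.reApplyInnerSelf, PiLp.inner_apply, RCLike.inner_apply,
      starRingEnd_apply, star_trivial, RCLike.re_to_real]
    exact Finset.sum_congr rfl fun v _ => by rw [hTapp]; ring
  have hNsq : ∀ y : EuclideanSpace ℝ V, ‖y‖ ^ 2 = ∑ v, y v ^ 2 := by
    intro y
    rw [EuclideanSpace.norm_sq_eq]
    simp [Real.norm_eq_abs, sq_abs]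
  have hQexp : ∀ y : EuclideanSpace ℝ V, ∑ v, (A *ᵥ y) v * y v = ∑ v, ∑ u, A v u * y u * y v := by
    intro y
    exact Finset.sum_congr rfl fun v _ => by rw [Matrix.mulVec, dotProduct, Finset.sum_mul]
  -- max on sphere
  have hne : (sphere (0 : EuclideanSpace ℝ V) 1).Nonempty := by
    refine ⟨EuclideanSpace.single (Classical.arbitrary V) (1:ℝ), ?_⟩
    simp [mem_sphere_iff_norm, EuclideanSpace.norm_single]
  obtain ⟨x₀, hx₀mem, hmax⟩ := (isCompact_sphere (0 : EuclideanSpace ℝ V) 1).exists_isMaxOn hne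
    T.reApplyInnerSelf_continuous.continuousOn
  have hx₀norm : ‖x₀‖ = 1 := by simpa [mem_sphere_iff_norm] using hx₀mem
  -- absolute value vector
  let x₁ : EuclideanSpace ℝ V := WithLp.toLp 2 (fun v => |x₀ v|)
  have hx₁app : ∀ v, x₁ v = |x₀ v| := fun v => rfl
  have hx₁norm : ‖x₁‖ = 1 := by
    have h1 : ‖x₁‖ ^ 2 = ‖x₀‖ ^ 2 := by
      rw [hNsq, hNsq]
      exact Finset.sum_congr rfl fun v _ => by rw [hx₁app, sq_abs]
    have h2 : ‖x₁‖ ^ 2 = 1 := by rw [h1, hx₀norm]; norm_num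
    nlinarith [norm_nonneg x₁]
  have hx₁ne : x₁ ≠ 0 := by
    intro h; rw [h, norm_zero] at hx₁norm; norm_num at hx₁norm
  have hmono : T.reApplyInnerSelf x₀ ≤ T.reApplyInnerSelf x₁ := by
    rw [hRe, hRe, hQexp, hQexp]
    refine Finset.sum_le_sum fun v _ => Finset.sum_le_sum fun u _ => ?_
    rw [hx₁app, hx₁app]
    calc A v u * x₀ u * x₀ v ≤ |A v u * x₀ u * x₀ v| := le_abs_self _
      _ = A v u * |x₀ u| * |x₀ v| := by rw [abs_mul, abs_mul, abs_of_nonneg (hAnn v u)]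
  have hmax₁ : IsMaxOn T.reApplyInnerSelf (sphere (0 : EuclideanSpace ℝ V) ‖x₁‖) x₁ := by
    rw [hx₁norm]
    intro y hy
    exact le_trans (hmax hy) hmono
  have hev := hsym.hasEigenvector_of_isMaxOn hx₁ne hmax₁
  set ρ := (⨆ y : {x : EuclideanSpace ℝ V // x ≠ 0}, T.rayleighQuotient y : ℝ) with hρdef
  have heq : ∀ v, (A *ᵥ (x₁ : V → ℝ)) v = ρ * x₁ v := by
    have h := hev.apply_eq_smul
    intro v
    have h2 := congrFun (congrArg (fun (y : EuclideanSpace ℝ V) => (y : V → ℝ)) h) v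
    simpa [hTapp] using h2
  -- bounds on rayleigh quotients
  haveI : Nonempty {x : EuclideanSpace ℝ V // x ≠ 0} := ⟨⟨x₁, hx₁ne⟩⟩
  have hbdd : ∀ y : EuclideanSpace ℝ V, y ≠ 0 → T.rayleighQuotient y ≤ T.reApplyInnerSelf x₀ := by
    intro y hy
    have h1 : (‖y‖⁻¹ : ℝ) ≠ 0 := inv_ne_zero (norm_ne_zero_iff.mpr hy)
    have h3 : ‖(‖y‖⁻¹ : ℝ) • y‖ = 1 := norm_smul_inv_norm hy
    rw [← T.rayleigh_smul y h1]
    have h4 : T.rayleighQuotient ((‖y‖⁻¹:ℝ) • y) = T.reApplyInnerSelf ((‖y‖⁻¹:ℝ) • y) := by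
      simp [ContinuousLinearMap.rayleighQuotient, h3]
    rw [h4]
    exact hmax (by simp [mem_sphere_iff_norm, h3])
  have hval : ∀ y : EuclideanSpace ℝ V, y ≠ 0 → T.rayleighQuotient y ≤ ρ := by
    intro y hy
    exact le_ciSup (f := fun y : {x : EuclideanSpace ℝ V // x ≠ 0} => T.rayleighQuotient y.1)
      ⟨T.reApplyInnerSelf x₀, by rintro r ⟨w, rfl⟩; exact hbdd w.1 w.2⟩ ⟨y, hy⟩
  have hQle : ∀ z : V → ℝ, ∑ v, (A *ᵥ z) v * z v ≤ ρ * ∑ v, z v ^ 2 := by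
    intro z
    set z' : EuclideanSpace ℝ V := (WithLp.equiv 2 (V → ℝ)).symm z with hz'def
    have hz'app : ∀ v, z' v = z v := fun v => rfl
    by_cases hz : z' = 0
    · have hz' : ∀ v, z v = 0 := fun v => by
        simpa [hz'app] using congrFun (congrArg WithLp.ofLp hz) v
      have h1 : ∑ v, (A *ᵥ z) v * z v = 0 := by
        apply Finset.sum_eq_zero; intro v _; rw [hz' v, mul_zero]
      have h2 : ∑ v, z v ^ 2 = 0 := by
        apply Finset.sum_eq_zero; intro v _; rw [hz' v]; norm_num
      rw [h1, h2, mul_zero]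
    · have h1 := hval z' hz
      have hnz : ‖z'‖ ≠ 0 := norm_ne_zero_iff.mpr hz
      have h2 : (0:ℝ) < ‖z'‖ ^ 2 := by positivity
      rw [ContinuousLinearMap.rayleighQuotient, div_le_iff₀ h2, hRe] at h1
      have h3 : ∑ v, (A *ᵥ z) v * z v = ∑ v, (A *ᵥ z') v * z' v := rfl
      calc ∑ v, (A *ᵥ z) v * z v ≤ ρ * ‖z'‖ ^ 2 := by rw [h3]; exact h1
        _ = ρ * ∑ v, z v ^ 2 := by rw [hNsq]; rfl
  -- specRad = ρ
  have hmem : ρ ∈ {μ : ℝ | ∃ x : V → ℝ, x ≠ 0 ∧ A *ᵥ x = μ • x} := by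
    refine ⟨(x₁ : V → ℝ), ?_, ?_⟩
    · intro h
      apply hx₁ne
      ext v
      exact congrFun h v
    · funext v
      rw [heq v]; rfl
  have hub : ∀ μ ∈ {μ : ℝ | ∃ x : V → ℝ, x ≠ 0 ∧ A *ᵥ x = μ • x}, μ ≤ ρ := by
    rintro μ ⟨w, hw0, hw⟩
    have hwpos : 0 < ∑ v, w v ^ 2 := by
      obtain ⟨v₀, hv₀⟩ := Function.ne_iff.mp hw0
      exact Finset.sum_pos' (fun v _ => sq_nonneg _) ⟨v₀, Finset.mem_univ _, by simpa using sq_pos_of_ne_zero hv₀⟩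
    have h1 : ∑ v, (A *ᵥ w) v * w v = μ * ∑ v, w v ^ 2 := by
      rw [hw, Finset.mul_sum]
      exact Finset.sum_congr rfl fun v _ => by
        simp [Pi.smul_apply, smul_eq_mul, sq]; ring
    have h2 := hQle w
    rw [h1] at h2
    exact le_of_mul_le_mul_right (by linarith) hwpos
  have hspec : specRad G = ρ := by
    have : specRad G = sSup {μ : ℝ | ∃ x : V → ℝ, x ≠ 0 ∧ A *ᵥ x = μ • x} := rfl
    rw [this]
    exact IsGreatest.csSup_eq ⟨hmem, hub⟩
  refine ⟨ρ, (x₁ : V → ℝ), ?_, fun v => abs_nonneg _, ?_, hspec, hQle⟩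
  · intro h
    apply hx₁ne
    ext v
    exact congrFun h v
  · funext v
    rw [heq v]; rfl

section jc
variable {s t : ℕ} {m : Fin t → ℕ}

lemma jc_adj_inl_inl (k l : Fin s) :
    (joinCliques s t m).Adj (Sum.inl k) (Sum.inl l) ↔ k ≠ l := by
  show (Sum.inl k ≠ Sum.inl l ∧ _) ↔ _
  simp

lemma jc_adj_inl_inr (k : Fin s) (q : Σ i : Fin t, Fin (m i)) :
    (joinCliques s t m).Adj (Sum.inl k) (Sum.inr q) := by
  exact ⟨by simp, by simp⟩

lemma jc_adj_inr_inl (k : Fin s) (q : Σ i : Fin t, Fin (m i)) :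
    (joinCliques s t m).Adj (Sum.inr q) (Sum.inl k) :=
  ((joinCliques s t m).adj_symm (jc_adj_inl_inr k q))

lemma jc_adj_inr_inr (a b : Σ i : Fin t, Fin (m i)) :
    (joinCliques s t m).Adj (Sum.inr a) (Sum.inr b) ↔ a ≠ b ∧ a.1 = b.1 := by
  show (Sum.inr a ≠ Sum.inr b ∧ _) ↔ _
  constructor
  · rintro ⟨h1, h2⟩
    exact ⟨by simpa using h1, h2 a b rfl rfl⟩
  · rintro ⟨h1, h2⟩
    refine ⟨by simpa using h1, ?_⟩
    rintro p q hp hq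
    obtain rfl : a = p := by simpa using hp
    obtain rfl : b = q := by simpa using hq
    exact h2

lemma adj_mulVec {V : Type*} [Fintype V] (G : SimpleGraph V) [DecidableRel G.Adj]
    (x : V → ℝ) (v : V) :
    (G.adjMatrix ℝ *ᵥ x) v = ∑ u, if G.Adj v u then x u else 0 := by
  rw [Matrix.mulVec, dotProduct]
  simp [SimpleGraph.adjMatrix_apply, ite_mul]

lemma sum_ite_ne {α : Type*} [Fintype α] [DecidableEq α] (k : α) (f : α → ℝ) :
    ∑ l, (if l = k then 0 else f l) = (∑ l, f l) - f k := by
  have h : ∀ l, (if l = k then (0:ℝ) else f l) = f l - (if l = k then f l else 0) := by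
    intro l; by_cases h : l = k <;> simp [h]
  simp only [h, Finset.sum_sub_distrib, Finset.sum_ite_eq' Finset.univ k f, Finset.mem_univ,
    if_true]

variable [DecidableRel (joinCliques s t m).Adj]

lemma jc_mulVec_inl (x : (Fin s ⊕ (Σ i : Fin t, Fin (m i))) → ℝ) (k : Fin s) :
    ((joinCliques s t m).adjMatrix ℝ *ᵥ x) (Sum.inl k)
      = ((∑ l, x (Sum.inl l)) - x (Sum.inl k)) + ∑ i, ∑ j, x (Sum.inr ⟨i, j⟩) := by
  rw [adj_mulVec, Fintype.sum_sum_type]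
  congr 1
  · rw [← sum_ite_ne k fun l => x (Sum.inl l)]
    refine Finset.sum_congr rfl fun l _ => ?_
    by_cases h : l = k
    · subst h
      rw [if_neg (fun h' => absurd rfl ((jc_adj_inl_inl l l).mp h')), if_pos rfl]
    · rw [if_pos ((jc_adj_inl_inl k l).mpr (Ne.symm h)), if_neg h]
  · rw [← Finset.univ_sigma_univ, Finset.sum_sigma]
    refine Finset.sum_congr rfl fun i _ => Finset.sum_congr rfl fun j _ => ?_
    rw [if_pos (jc_adj_inl_inr k ⟨i, j⟩)]

lemma jc_mulVec_inr (x : (Fin s ⊕ (Σ i : Fin t, Fin (m i))) → ℝ) (i : Fin t) (j : Fin (m i)) :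
    ((joinCliques s t m).adjMatrix ℝ *ᵥ x) (Sum.inr ⟨i, j⟩)
      = (∑ l, x (Sum.inl l)) + ((∑ j', x (Sum.inr ⟨i, j'⟩)) - x (Sum.inr ⟨i, j⟩)) := by
  rw [adj_mulVec, Fintype.sum_sum_type]
  congr 1
  · refine Finset.sum_congr rfl fun l _ => ?_
    rw [if_pos (jc_adj_inr_inl l ⟨i, j⟩)]
  · rw [← Finset.univ_sigma_univ, Finset.sum_sigma]
    have hterm : ∀ i' : Fin t,
        (∑ j' : Fin (m i'), if (joinCliques s t m).Adj (Sum.inr ⟨i, j⟩) (Sum.inr ⟨i', j'⟩)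
          then x (Sum.inr ⟨i', j'⟩) else 0)
        = if i' = i then ((∑ j', x (Sum.inr ⟨i, j'⟩)) - x (Sum.inr ⟨i, j⟩)) else 0 := by
      intro i'
      by_cases hi : i' = i
      · subst hi
        rw [if_pos rfl, ← sum_ite_ne j fun j'' => x (Sum.inr ⟨i', j''⟩)]
        refine Finset.sum_congr rfl fun j' _ => ?_
        by_cases hj : j' = j
        · subst hj
          rw [if_neg (fun h => absurd rfl ((jc_adj_inr_inr _ _).mp h).1), if_pos rfl]
        · have hne : (⟨i', j⟩ : Σ i : Fin t, Fin (m i)) ≠ ⟨i', j'⟩ := by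
            intro h
            exact hj (eq_of_heq (Sigma.mk.inj_iff.mp h).2).symm
          rw [if_pos ((jc_adj_inr_inr _ _).mpr ⟨hne, rfl⟩), if_neg hj]
      · rw [if_neg hi]
        refine Finset.sum_eq_zero fun j' _ => ?_
        rw [if_neg]
        intro h
        exact hi (((jc_adj_inr_inr _ _).mp h).2.symm)
    rw [Finset.sum_congr rfl fun i' _ => hterm i', Finset.sum_ite_eq' Finset.univ i _]
    simp

end jc

/-- Let `n = n_1 + ⋯ + n_t + s` with `n_1 ≥ n_2 ≥ ⋯ ≥ n_t ≥ p` and `n_1 < n - s - p(t-1)`.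
Then `ρ(K_s ∇ (K_{n_1} ∪ ⋯ ∪ K_{n_t})) < ρ(K_s ∇ (K_{n-s-p(t-1)} ∪ (t-1)K_p))`. -/
theorem spectralRadius_joinCliques_lt
    (n s t p : ℕ) (hs : 1 ≤ s) (ht : 1 ≤ t) (hp : 1 ≤ p)
    (m : Fin t → ℕ) (hanti : Antitone m) (hmp : ∀ i, p ≤ m i)
    (hsum : n = (∑ i, m i) + s)
    (hlt : m ⟨0, ht⟩ < n - s - p * (t - 1)) :
    specRad (joinCliques s t m) <
      specRad (joinCliques s t fun i => if i.val = 0 then n - s - p * (t - 1) else p) := by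
  classical
  set N := n - s - p * (t - 1) with hNdef
  set m' : Fin t → ℕ := fun i => if i.val = 0 then N else p with hm'def
  set i₀ : Fin t := ⟨0, ht⟩ with hi₀def
  haveI hne1 : Nonempty (Fin s ⊕ Σ i : Fin t, Fin (m i)) := ⟨Sum.inl ⟨0, hs⟩⟩
  haveI hne2 : Nonempty (Fin s ⊕ Σ i : Fin t, Fin (m' i)) := ⟨Sum.inl ⟨0, hs⟩⟩
  -- nat facts
  have hsumm : ∑ i, m i = n - s := by omega
  have hpt : p * (t - 1) ≤ ∑ i, m i := by
    calc p * (t - 1) ≤ p * t := Nat.mul_le_mul_left _ (Nat.sub_le _ _)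
      _ = ∑ _i : Fin t, p := by rw [Finset.sum_const, Finset.card_univ, Fintype.card_fin]; ring
      _ ≤ ∑ i, m i := Finset.sum_le_sum fun i _ => hmp i
  have hNnat : N + p * (t - 1) = ∑ i, m i := by omega
  have hltN : m i₀ < N := hlt
  have hex : ∃ i, i ≠ i₀ ∧ p < m i := by
    by_contra h
    push_neg at h
    have hall : ∀ i ∈ Finset.univ.erase i₀, m i = p := by
      intro i hi
      exact le_antisymm (h i (Finset.mem_erase.mp hi).1) (hmp i)
    have hsplit : ∑ i, m i = m i₀ + (t - 1) * p := by
      rw [← Finset.add_sum_erase _ _ (Finset.mem_univ i₀)]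
      congr 1
      rw [Finset.sum_congr rfl hall, Finset.sum_const,
        Finset.card_erase_of_mem (Finset.mem_univ i₀), Finset.card_univ, Fintype.card_fin,
        smul_eq_mul]
    rw [Nat.mul_comm (t - 1) p] at hsplit
    omega
  obtain ⟨i₁, hi₁, hpi₁⟩ := hex
  have hm0p : p < m i₀ := lt_of_lt_of_le hpi₁ (hanti (by simp [hi₀def, Fin.le_def]))
  -- spectral data
  obtain ⟨ρ, x, hx0, hxnn, heig, hspec1, -⟩ := specRad_key (joinCliques s t m)
  obtain ⟨ρ₂, x₂, -, -, -, hspec2, hQ2⟩ := specRad_key (joinCliques s t m')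
  have heigv : ∀ v, ((joinCliques s t m).adjMatrix ℝ *ᵥ x) v = ρ * x v := by
    intro v; rw [heig]; rfl
  set σ : ℝ := ∑ k : Fin s, x (Sum.inl k) with hσdef
  set β : Fin t → ℝ := fun i => ∑ j, x (Sum.inr ⟨i, j⟩) with hβdef
  have hsR : (0:ℝ) < s := by exact_mod_cast hs
  have hmRpos : ∀ i, (0:ℝ) < m i := by
    intro i
    have h1 : 0 < m i := lt_of_lt_of_le Nat.zero_lt_one (le_trans hp (hmp i))
    exact_mod_cast h1
  have hE1 : ρ * σ = ((s:ℝ) * σ - σ) + (s:ℝ) * ∑ i, β i := by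
    have h1 : ∀ k : Fin s, ρ * x (Sum.inl k) = (σ - x (Sum.inl k)) + ∑ i, β i := by
      intro k
      rw [← heigv, jc_mulVec_inl]
    calc ρ * σ = ∑ k : Fin s, ρ * x (Sum.inl k) := by rw [← Finset.mul_sum]
      _ = ∑ k : Fin s, ((σ - x (Sum.inl k)) + ∑ i, β i) := Finset.sum_congr rfl fun k _ => h1 k
      _ = ((s:ℝ) * σ - σ) + (s:ℝ) * ∑ i, β i := by
          rw [Finset.sum_add_distrib, Finset.sum_sub_distrib, Finset.sum_const, Finset.sum_const,
            Finset.card_univ, Fintype.card_fin, nsmul_eq_mul, nsmul_eq_mul]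
  have hE2 : ∀ i, ρ * β i = (m i : ℝ) * σ + ((m i : ℝ) * β i - β i) := by
    intro i
    have h1 : ∀ j : Fin (m i), ρ * x (Sum.inr ⟨i, j⟩) = σ + (β i - x (Sum.inr ⟨i, j⟩)) := by
      intro j
      rw [← heigv, jc_mulVec_inr]
    calc ρ * β i = ∑ j : Fin (m i), ρ * x (Sum.inr ⟨i, j⟩) := by rw [← Finset.mul_sum]
      _ = ∑ j : Fin (m i), (σ + (β i - x (Sum.inr ⟨i, j⟩))) := Finset.sum_congr rfl fun j _ => h1 j
      _ = (m i : ℝ) * σ + ((m i : ℝ) * β i - β i) := by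
          rw [Finset.sum_add_distrib, Finset.sum_sub_distrib, Finset.sum_const, Finset.sum_const,
            Finset.card_univ, Fintype.card_fin, nsmul_eq_mul, nsmul_eq_mul]
  have hσnn : 0 ≤ σ := Finset.sum_nonneg fun k _ => hxnn _
  have hβnn : ∀ i, 0 ≤ β i := fun i => Finset.sum_nonneg fun j _ => hxnn _
  have htot : 0 < σ + ∑ i, β i := by
    have hsum2 : σ + ∑ i, β i = ∑ v, x v := by
      rw [Fintype.sum_sum_type, ← Finset.univ_sigma_univ, Finset.sum_sigma]
    rw [hsum2]
    obtain ⟨v₀, hv₀⟩ := Function.ne_iff.mp hx0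
    refine Finset.sum_pos' (fun v _ => hxnn v) ⟨v₀, Finset.mem_univ _, ?_⟩
    exact lt_of_le_of_ne (hxnn v₀) (Ne.symm hv₀)
  have hσpos : 0 < σ := by
    rcases eq_or_lt_of_le hσnn with h | h
    · exfalso
      rw [← h] at hE1
      have hβ0 : (s:ℝ) * ∑ i, β i = 0 := by linarith
      have : ∑ i, β i = 0 := by
        rcases mul_eq_zero.mp hβ0 with h' | h'
        · exact absurd h' (ne_of_gt hsR)
        · exact h'
      rw [← h] at htot
      linarith
    · exact h
  -- scaled quantities
  set c : ℝ := σ / s with hcdef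
  set b : Fin t → ℝ := fun i => β i / (m i : ℝ) with hbdef
  have hσeq : σ = (s:ℝ) * c := by rw [hcdef]; field_simp
  have hβeq : ∀ i, β i = (m i : ℝ) * b i := by
    intro i; rw [hbdef]; field_simp [ne_of_gt (hmRpos i)]
  have hcpos : 0 < c := div_pos hσpos hsR
  have hKey : ∀ i, (ρ + 1 - (m i : ℝ)) * b i = (s:ℝ) * c := by
    intro i
    have h := hE2 i
    rw [hβeq i, hσeq] at h
    have h2 : (m i : ℝ) * ((ρ + 1 - (m i : ℝ)) * b i) = (m i : ℝ) * ((s:ℝ) * c) := by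
      linear_combination h
    exact mul_left_cancel₀ (ne_of_gt (hmRpos i)) h2
  have hbnn : ∀ i, 0 ≤ b i := fun i => div_nonneg (hβnn i) (le_of_lt (hmRpos i))
  have hscpos : 0 < (s:ℝ) * c := mul_pos hsR hcpos
  have hbpos : ∀ i, 0 < b i := by
    intro i
    rcases eq_or_lt_of_le (hbnn i) with h | h
    · exfalso; have := hKey i; rw [← h, mul_zero] at this; linarith
    · exact h
  have hρm : ∀ i, 0 < ρ + 1 - (m i : ℝ) := by
    intro i
    have := hKey i
    by_contra hcon
    push_neg at hcon
    nlinarith [hbpos i]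
  have hmle : ∀ i, (m i : ℝ) ≤ (m i₀ : ℝ) := by
    intro i
    have : m i ≤ m i₀ := hanti (by simp [hi₀def, Fin.le_def])
    exact_mod_cast this
  have hble : ∀ i, b i ≤ b i₀ := by
    intro i
    have h1 : (ρ + 1 - (m i : ℝ)) * b i ≤ (ρ + 1 - (m i : ℝ)) * b i₀ := by
      rw [hKey i, ← hKey i₀]
      nlinarith [hbpos i₀, hmle i, hρm i₀]
    exact le_of_mul_le_mul_left h1 (hρm i)
  -- cast facts
  have hPR : (1:ℝ) ≤ p := by exact_mod_cast hp
  have hmPle : ∀ i, (p:ℝ) ≤ (m i : ℝ) := fun i => by exact_mod_cast hmp i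
  have hNpos : (0:ℝ) < N := by
    have : 0 < N := lt_of_le_of_lt (Nat.zero_le _) hltN
    exact_mod_cast this
  have hm0N : (m i₀ : ℝ) < (N : ℝ) := by exact_mod_cast hltN
  have hpm1R : (p:ℝ) < (m i₁ : ℝ) := by exact_mod_cast hpi₁
  have hpm0R : (p:ℝ) < (m i₀ : ℝ) := by exact_mod_cast hm0p
  have hNR : (N:ℝ) + (p:ℝ) * ((t:ℝ) - 1) = ∑ i, ((m i : ℕ):ℝ) := by
    have h := congrArg (fun k : ℕ => (k:ℝ)) hNnat
    push_cast [Nat.cast_sub ht] at h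
    exact h
  -- erase-sum atoms
  set SB : ℝ := ∑ i ∈ Finset.univ.erase i₀, b i with hSBdef
  set SB2 : ℝ := ∑ i ∈ Finset.univ.erase i₀, (b i) ^ 2 with hSB2def
  set SMB : ℝ := ∑ i ∈ Finset.univ.erase i₀, (m i : ℝ) * b i with hSMBdef
  set SMB2 : ℝ := ∑ i ∈ Finset.univ.erase i₀, (m i : ℝ) * (b i) ^ 2 with hSMB2def
  set SM2B2 : ℝ := ∑ i ∈ Finset.univ.erase i₀, ((m i : ℝ)) ^ 2 * (b i) ^ 2 with hSM2B2def
  -- weights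
  set u : Fin t → ℝ := fun i => if i = i₀ then (m i : ℝ) else (m i : ℝ) - (p:ℝ) with hudef
  have hu_nn : ∀ i, 0 ≤ u i := by
    intro i; rw [hudef]; dsimp only; split_ifs
    · exact (hmRpos i).le
    · linarith [hmPle i]
  have hu_sum : ∑ i, u i = (N:ℝ) := by
    have h1 : ∀ i, u i = ((m i : ℝ) - (p:ℝ)) + (if i = i₀ then (p:ℝ) else 0) := by
      intro i; rw [hudef]; dsimp only; split_ifs <;> ring
    rw [Finset.sum_congr rfl fun i _ => h1 i, Finset.sum_add_distrib, Finset.sum_sub_distrib,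
      Finset.sum_const, Finset.sum_ite_eq' Finset.univ i₀, Finset.card_univ, Fintype.card_fin]
    simp only [Finset.mem_univ, if_true, nsmul_eq_mul]
    linarith [hNR]
  set Sig : ℝ := ∑ i, u i * b i with hSigdef0
  set Ssq : ℝ := ∑ i, u i * (b i) ^ 2 with hSsqdef0
  set B : ℝ := Sig / (N:ℝ) with hBdef
  have hNB : (N:ℝ) * B = Sig := by rw [hBdef]; field_simp
  have hCS : Sig ^ 2 ≤ (N:ℝ) * Ssq := by
    have h := Finset.sum_mul_sq_le_sq_mul_sq Finset.univ (fun i => Real.sqrt (u i))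
      (fun i => Real.sqrt (u i) * b i)
    have e1 : ∑ i, Real.sqrt (u i) * (Real.sqrt (u i) * b i) = Sig := by
      rw [hSigdef0]
      exact Finset.sum_congr rfl fun i _ => by rw [← mul_assoc, Real.mul_self_sqrt (hu_nn i)]
    have e2 : ∑ i, Real.sqrt (u i) ^ 2 = (N:ℝ) := by
      rw [← hu_sum]
      exact Finset.sum_congr rfl fun i _ => Real.sq_sqrt (hu_nn i)
    have e3 : ∑ i, (Real.sqrt (u i) * b i) ^ 2 = Ssq := by
      rw [hSsqdef0]
      exact Finset.sum_congr rfl fun i _ => by rw [mul_pow, Real.sq_sqrt (hu_nn i)]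
    rw [e1, e2, e3] at h
    exact h
  have hSigE : Sig = (m i₀ : ℝ) * b i₀ + (SMB - (p:ℝ) * SB) := by
    rw [hSigdef0, ← Finset.add_sum_erase _ (fun i => u i * b i) (Finset.mem_univ i₀)]
    have h0 : u i₀ * b i₀ = (m i₀ : ℝ) * b i₀ := by
      rw [hudef]; dsimp only; rw [if_pos rfl]
    have h1 : ∑ i ∈ Finset.univ.erase i₀, u i * b i = SMB - (p:ℝ) * SB := by
      rw [hSMBdef, hSBdef, Finset.mul_sum, ← Finset.sum_sub_distrib]
      refine Finset.sum_congr rfl fun i hi => ?_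
      rw [hudef]; dsimp only; rw [if_neg (Finset.mem_erase.mp hi).1]; ring
    rw [h0, h1]
  have hSsqE : Ssq = (m i₀ : ℝ) * (b i₀) ^ 2 + (SMB2 - (p:ℝ) * SB2) := by
    rw [hSsqdef0, ← Finset.add_sum_erase _ (fun i => u i * (b i) ^ 2) (Finset.mem_univ i₀)]
    have h0 : u i₀ * (b i₀) ^ 2 = (m i₀ : ℝ) * (b i₀) ^ 2 := by
      rw [hudef]; dsimp only; rw [if_pos rfl]
    have h1 : ∑ i ∈ Finset.univ.erase i₀, u i * (b i) ^ 2 = SMB2 - (p:ℝ) * SB2 := by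
      rw [hSMB2def, hSB2def, Finset.mul_sum, ← Finset.sum_sub_distrib]
      refine Finset.sum_congr rfl fun i hi => ?_
      rw [hudef]; dsimp only; rw [if_neg (Finset.mem_erase.mp hi).1]; ring
    rw [h0, h1]
  have hρc : ρ * c = ((s:ℝ) - 1) * c + ((m i₀ : ℝ) * b i₀ + SMB) := by
    have hT : ∑ i, β i = (m i₀ : ℝ) * b i₀ + SMB := by
      rw [hSMBdef, Finset.sum_congr rfl fun i _ => hβeq i,
        ← Finset.add_sum_erase _ (fun i => (m i : ℝ) * b i) (Finset.mem_univ i₀)]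
    have h := hE1
    rw [hσeq, hT] at h
    have h2 : (s:ℝ) * (ρ * c) = (s:ℝ) * (((s:ℝ) - 1) * c + ((m i₀ : ℝ) * b i₀ + SMB)) := by
      linear_combination h
    exact mul_left_cancel₀ (ne_of_gt hsR) h2
  have hF2 : (s:ℝ) * c * ((m i₀ : ℝ) * b i₀)
      = (ρ + 1) * ((m i₀ : ℝ) * (b i₀) ^ 2) - (m i₀ : ℝ) ^ 2 * (b i₀) ^ 2 := by
    linear_combination (-((m i₀ : ℝ) * b i₀)) * hKey i₀
  have hF1 : (s:ℝ) * c * SMB = (ρ + 1) * SMB2 - SM2B2 := by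
    rw [hSMBdef, hSMB2def, hSM2B2def, Finset.mul_sum]
    have h1 : ∀ i ∈ Finset.univ.erase i₀,
        (s:ℝ) * c * ((m i : ℝ) * b i)
          = (ρ + 1) * ((m i : ℝ) * (b i) ^ 2) - ((m i : ℝ)) ^ 2 * (b i) ^ 2 := by
      intro i _
      linear_combination (-((m i : ℝ) * b i)) * hKey i
    rw [Finset.sum_congr rfl h1, Finset.sum_sub_distrib, ← Finset.mul_sum]
  have hsub : ∑ i ∈ Finset.univ.erase i₀, ((m i : ℝ) - (p:ℝ)) * b i = SMB - (p:ℝ) * SB := by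
    rw [hSMBdef, hSBdef]
    have h1 : ∀ i ∈ Finset.univ.erase i₀,
        ((m i : ℝ) - (p:ℝ)) * b i = (m i : ℝ) * b i - (p:ℝ) * b i := fun i _ => by ring
    rw [Finset.sum_congr rfl h1, Finset.sum_sub_distrib, ← Finset.mul_sum]
  have hUsq : SM2B2 - 2 * (p:ℝ) * SMB2 + (p:ℝ) ^ 2 * SB2 ≤ (SMB - (p:ℝ) * SB) ^ 2 := by
    have h1 := Finset.sum_sq_le_sq_sum_of_nonneg
      (f := fun i => ((m i : ℝ) - (p:ℝ)) * b i) (s := Finset.univ.erase i₀)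
      (fun i _ => mul_nonneg (by linarith [hmPle i]) (hbnn i))
    have h3 : ∑ i ∈ Finset.univ.erase i₀, (((m i : ℝ) - (p:ℝ)) * b i) ^ 2
        = SM2B2 - 2 * (p:ℝ) * SMB2 + (p:ℝ) ^ 2 * SB2 := by
      rw [hSM2B2def, hSMB2def, hSB2def]
      have h3a : ∀ i ∈ Finset.univ.erase i₀,
          (((m i : ℝ) - (p:ℝ)) * b i) ^ 2
            = (((m i : ℝ)) ^ 2 * (b i) ^ 2 - 2 * (p:ℝ) * ((m i : ℝ) * (b i) ^ 2))
              + (p:ℝ) ^ 2 * (b i) ^ 2 := fun i _ => by ring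
      rw [Finset.sum_congr rfl h3a, Finset.sum_add_distrib, Finset.sum_sub_distrib,
        ← Finset.mul_sum, ← Finset.mul_sum]
    rw [← h3, ← hsub]
    exact h1
  have hSexp : ∑ i ∈ Finset.univ.erase i₀,
      ((m i : ℝ) - (p:ℝ)) * b i * ((m i₀ : ℝ) * b i₀ - (p:ℝ) * b i)
      = (m i₀ : ℝ) * b i₀ * SMB - (p:ℝ) * ((m i₀ : ℝ) * b i₀) * SB
        - (p:ℝ) * SMB2 + (p:ℝ) ^ 2 * SB2 := by
    rw [hSMBdef, hSMB2def, hSBdef, hSB2def]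
    have h1 : ∀ i ∈ Finset.univ.erase i₀,
        ((m i : ℝ) - (p:ℝ)) * b i * ((m i₀ : ℝ) * b i₀ - (p:ℝ) * b i)
          = (((m i₀ : ℝ) * b i₀ * ((m i : ℝ) * b i)
              - (p:ℝ) * ((m i₀ : ℝ) * b i₀) * (b i))
              - (p:ℝ) * ((m i : ℝ) * (b i) ^ 2)) + (p:ℝ) ^ 2 * ((b i) ^ 2) := fun i _ => by ring
    rw [Finset.sum_congr rfl h1, Finset.sum_add_distrib, Finset.sum_sub_distrib,
      Finset.sum_sub_distrib, ← Finset.mul_sum, ← Finset.mul_sum, ← Finset.mul_sum,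
      ← Finset.mul_sum]
  have hSpos : 0 < (m i₀ : ℝ) * b i₀ * SMB - (p:ℝ) * ((m i₀ : ℝ) * b i₀) * SB
      - (p:ℝ) * SMB2 + (p:ℝ) ^ 2 * SB2 := by
    rw [← hSexp]
    refine Finset.sum_pos' (fun i hi => ?_) ⟨i₁, Finset.mem_erase.mpr ⟨hi₁, Finset.mem_univ _⟩, ?_⟩
    · have e1 : 0 ≤ (m i₀ : ℝ) * (b i₀ - b i) :=
        mul_nonneg (hmRpos i₀).le (by linarith [hble i])
      have e2 : 0 ≤ ((m i₀ : ℝ) - (p:ℝ)) * b i := mul_nonneg (by linarith) (hbnn i)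
      have e3 : 0 ≤ (m i₀ : ℝ) * b i₀ - (p:ℝ) * b i := by linarith [e1, e2]
      exact mul_nonneg (mul_nonneg (by linarith [hmPle i]) (hbnn i)) e3
    · have e1 : 0 ≤ (m i₀ : ℝ) * (b i₀ - b i₁) :=
        mul_nonneg (hmRpos i₀).le (by linarith [hble i₁])
      have e2 : 0 < ((m i₀ : ℝ) - (p:ℝ)) * b i₁ := mul_pos (by linarith) (hbpos i₁)
      have e3 : 0 < (m i₀ : ℝ) * b i₀ - (p:ℝ) * b i₁ := by linarith [e1, e2]
      exact mul_pos (mul_pos (by linarith) (hbpos i₁)) e3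
  have hSsqge : Sig * B ≤ Ssq := by
    have h1 : (N:ℝ) * (Sig * B) = Sig ^ 2 := by rw [← hNB]; ring
    have h2 : (N:ℝ) * (Sig * B) ≤ (N:ℝ) * Ssq := by rw [h1]; exact hCS
    exact le_of_mul_le_mul_left h2 hNpos
  have hρ1 : 0 < ρ + 1 := by linarith [hρm i₀, hmRpos i₀]
  -- test vector on the second graph
  set w : Fin t → ℝ := fun i => if i = i₀ then B else b i with hwdef
  set z : (Fin s ⊕ Σ i : Fin t, Fin (m' i)) → ℝ := Sum.elim (fun _ => c) (fun q => w q.1)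
    with hzdef
  have hzinl : ∀ k : Fin s, z (Sum.inl k) = c := fun _ => rfl
  have hzinr : ∀ (i : Fin t) (j : Fin (m' i)), z (Sum.inr ⟨i, j⟩) = w i := fun _ _ => rfl
  have hm'cast : ∀ i, ((m' i : ℕ) : ℝ) = if i = i₀ then ((N:ℕ):ℝ) else ((p:ℕ):ℝ) := by
    intro i
    by_cases h : i = i₀
    · rw [if_pos h, h]
      rfl
    · have hv : i.val ≠ 0 := fun hv => h (by rw [hi₀def]; exact Fin.ext hv)
      have h2 : m' i = p := if_neg hv
      rw [if_neg h, h2]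
  have hw0 : w i₀ = B := if_pos rfl
  have hwE : ∀ i, i ≠ i₀ → w i = b i := fun i h => if_neg h
  have hzsl : ∑ l : Fin s, z (Sum.inl l) = (s:ℝ) * c := by
    rw [Finset.sum_congr rfl fun l _ => hzinl l, Finset.sum_const, Finset.card_univ,
      Fintype.card_fin, nsmul_eq_mul]
  have hzsr : ∀ i, ∑ j : Fin (m' i), z (Sum.inr ⟨i, j⟩) = ((m' i : ℕ):ℝ) * w i := by
    intro i
    rw [Finset.sum_congr rfl fun j _ => hzinr i j, Finset.sum_const, Finset.card_univ,
      Fintype.card_fin, nsmul_eq_mul]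
  have hmv2_inl : ∀ k : Fin s, ((joinCliques s t m').adjMatrix ℝ *ᵥ z) (Sum.inl k)
      = ((s:ℝ) * c - c) + ∑ i, ((m' i : ℕ):ℝ) * w i := by
    intro k
    rw [jc_mulVec_inl, hzsl, hzinl]
    congr 1
    exact Finset.sum_congr rfl fun i _ => hzsr i
  have hmv2_inr : ∀ (i : Fin t) (j : Fin (m' i)),
      ((joinCliques s t m').adjMatrix ℝ *ᵥ z) (Sum.inr ⟨i, j⟩)
        = (s:ℝ) * c + (((m' i : ℕ):ℝ) * w i - w i) := by
    intro i j
    rw [jc_mulVec_inr, hzsl, hzsr i, hzinr]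
  have hQz : ∑ v, ((joinCliques s t m').adjMatrix ℝ *ᵥ z) v * z v
      = (s:ℝ) * ((((s:ℝ) * c - c) + ∑ i, ((m' i : ℕ):ℝ) * w i) * c)
        + ∑ i, ((m' i : ℕ):ℝ) * (((s:ℝ) * c + (((m' i : ℕ):ℝ) * w i - w i)) * w i) := by
    rw [Fintype.sum_sum_type, ← Finset.univ_sigma_univ, Finset.sum_sigma]
    congr 1
    · rw [Finset.sum_congr rfl fun k _ => by rw [hmv2_inl k, hzinl k], Finset.sum_const,
        Finset.card_univ, Fintype.card_fin, nsmul_eq_mul]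
    · refine Finset.sum_congr rfl fun i _ => ?_
      rw [Finset.sum_congr rfl fun j _ => by rw [hmv2_inr i j, hzinr i j], Finset.sum_const,
        Finset.card_univ, Fintype.card_fin, nsmul_eq_mul]
  have hNz : ∑ v, z v ^ 2 = (s:ℝ) * c ^ 2 + ∑ i, ((m' i : ℕ):ℝ) * (w i) ^ 2 := by
    rw [Fintype.sum_sum_type, ← Finset.univ_sigma_univ, Finset.sum_sigma]
    congr 1
    · rw [Finset.sum_congr rfl fun k _ => by rw [hzinl k], Finset.sum_const, Finset.card_univ,
        Fintype.card_fin, nsmul_eq_mul]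
    · refine Finset.sum_congr rfl fun i _ => ?_
      rw [Finset.sum_congr rfl fun j _ => by rw [hzinr i j], Finset.sum_const,
        Finset.card_univ, Fintype.card_fin, nsmul_eq_mul]
  have hMT : ∑ i, ((m' i : ℕ):ℝ) * w i = (m i₀ : ℝ) * b i₀ + SMB := by
    rw [← Finset.add_sum_erase _ (fun i => ((m' i:ℕ):ℝ) * w i) (Finset.mem_univ i₀)]
    have h0 : ((m' i₀ : ℕ):ℝ) * w i₀ = (N:ℝ) * B := by
      rw [hm'cast i₀, if_pos rfl, hw0]
    have h1 : ∑ i ∈ Finset.univ.erase i₀, ((m' i:ℕ):ℝ) * w i = (p:ℝ) * SB := by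
      rw [hSBdef, Finset.mul_sum]
      refine Finset.sum_congr rfl fun i hi => ?_
      rw [hm'cast i, if_neg (Finset.mem_erase.mp hi).1, hwE i (Finset.mem_erase.mp hi).1]
    rw [h0, h1, hNB, hSigE]
    ring
  have hQsplit : ∑ i, ((m' i : ℕ):ℝ) * (((s:ℝ) * c + (((m' i : ℕ):ℝ) * w i - w i)) * w i)
      = ((s:ℝ) * c * Sig + Sig ^ 2 - Sig * B)
        + ((s:ℝ) * c * (p:ℝ) * SB + ((p:ℝ) ^ 2 * SB2 - (p:ℝ) * SB2)) := by
    rw [← Finset.add_sum_erase _ _ (Finset.mem_univ i₀)]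
    have h0 : ((m' i₀ : ℕ):ℝ) * (((s:ℝ) * c + (((m' i₀:ℕ):ℝ) * w i₀ - w i₀)) * w i₀)
        = (s:ℝ) * c * Sig + Sig ^ 2 - Sig * B := by
      rw [hm'cast i₀, if_pos rfl, hw0]
      have hx1 : ((N:ℕ):ℝ) * (((s:ℝ) * c + (((N:ℕ):ℝ) * B - B)) * B)
          = (s:ℝ) * c * ((N:ℝ) * B) + ((N:ℝ) * B) ^ 2 - ((N:ℝ) * B) * B := by ring
      rw [hx1, hNB]
    have h1 : ∑ i ∈ Finset.univ.erase i₀,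
        ((m' i:ℕ):ℝ) * (((s:ℝ) * c + (((m' i:ℕ):ℝ) * w i - w i)) * w i)
        = (s:ℝ) * c * (p:ℝ) * SB + ((p:ℝ) ^ 2 * SB2 - (p:ℝ) * SB2) := by
      rw [hSBdef, hSB2def, Finset.mul_sum, Finset.mul_sum, Finset.mul_sum,
        ← Finset.sum_sub_distrib, ← Finset.sum_add_distrib]
      refine Finset.sum_congr rfl fun i hi => ?_
      rw [hm'cast i, if_neg (Finset.mem_erase.mp hi).1, hwE i (Finset.mem_erase.mp hi).1]
      ring
    rw [h0, h1]
  have hNzsplit : ∑ i, ((m' i : ℕ):ℝ) * (w i) ^ 2 = Sig * B + (p:ℝ) * SB2 := by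
    rw [← Finset.add_sum_erase _ _ (Finset.mem_univ i₀)]
    have h0 : ((m' i₀:ℕ):ℝ) * (w i₀) ^ 2 = Sig * B := by
      rw [hm'cast i₀, if_pos rfl, hw0, ← hNB]; ring
    have h1 : ∑ i ∈ Finset.univ.erase i₀, ((m' i:ℕ):ℝ) * (w i) ^ 2 = (p:ℝ) * SB2 := by
      rw [hSB2def, Finset.mul_sum]
      refine Finset.sum_congr rfl fun i hi => ?_
      rw [hm'cast i, if_neg (Finset.mem_erase.mp hi).1, hwE i (Finset.mem_erase.mp hi).1]
    rw [h0, h1]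
  have hmain : ρ * ∑ v, z v ^ 2
      < ∑ v, ((joinCliques s t m').adjMatrix ℝ *ᵥ z) v * z v := by
    rw [hQz, hNz, hQsplit, hNzsplit, hMT]
    have hDeq : ((s:ℝ) * ((((s:ℝ) * c - c) + ((m i₀:ℝ) * b i₀ + SMB)) * c)
          + (((s:ℝ) * c * Sig + Sig ^ 2 - Sig * B)
            + ((s:ℝ) * c * (p:ℝ) * SB + ((p:ℝ) ^ 2 * SB2 - (p:ℝ) * SB2))))
          - ρ * ((s:ℝ) * c ^ 2 + (Sig * B + (p:ℝ) * SB2))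
        = (ρ + 1) * (Ssq - Sig * B)
          + ((SMB - (p:ℝ) * SB) ^ 2 - (SM2B2 - 2 * (p:ℝ) * SMB2 + (p:ℝ) ^ 2 * SB2))
          + 2 * ((m i₀:ℝ) * b i₀ * SMB - (p:ℝ) * ((m i₀:ℝ) * b i₀) * SB
              - (p:ℝ) * SMB2 + (p:ℝ) ^ 2 * SB2) := by
      linear_combination (-((s:ℝ) * c)) * hρc + hF1 + hF2
        + ((s:ℝ) * c + Sig + (m i₀:ℝ) * b i₀ + (SMB - (p:ℝ) * SB)) * hSigE
        + (-(ρ + 1)) * hSsqE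
    have e1 : 0 ≤ (ρ + 1) * (Ssq - Sig * B) := mul_nonneg hρ1.le (by linarith [hSsqge])
    rw [← sub_pos, hDeq]
    have e2 : 0 ≤ (SMB - (p:ℝ) * SB) ^ 2 - (SM2B2 - 2 * (p:ℝ) * SMB2 + (p:ℝ) ^ 2 * SB2) := by
      linarith [hUsq]
    linarith [hSpos, e1, e2]
  have hzpos : 0 < ∑ v, z v ^ 2 := by
    rw [hNz, hNzsplit]
    have hSignn : 0 ≤ Sig := by
      rw [hSigdef0]; exact Finset.sum_nonneg fun i _ => mul_nonneg (hu_nn i) (hbnn i)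
    have hBnn : 0 ≤ B := by rw [hBdef]; exact div_nonneg hSignn hNpos.le
    have h1 : 0 ≤ Sig * B := mul_nonneg hSignn hBnn
    have h2 : 0 ≤ (p:ℝ) * SB2 := by
      refine mul_nonneg (by positivity) ?_
      rw [hSB2def]; exact Finset.sum_nonneg fun i _ => sq_nonneg _
    have h3 : 0 < (s:ℝ) * c ^ 2 := mul_pos hsR (pow_pos hcpos 2)
    linarith
  have hfin : ρ < ρ₂ := lt_of_mul_lt_mul_right (lt_of_lt_of_le hmain (hQ2 z)) hzpos.le
  rw [hspec1, hspec2]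
  exact hfin
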